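/- arXiv:math/9910096 — 5 statements merged into one kernel-verified Lean document; each statement's English description precedes it below -/
import Mathlib

section
/- For every natural number n ≥ 1, sum over even k in {0,...,2n} of C(2n,k)_q * q^(n(2n-k) + k(k-1)/2) equals the sum over odd k in {0,...,2n} of C(2n,k)_q * q^(n(2n-k) + k(k-1)/2), as polynomials in q. -/
noncomputable section

/-- The Gaussian binomial coefficient as a polynomial in `q` (Pascal recursion). -/
def gauss : ℕ → ℕ → Polynomial ℤ
  | _, 0 => 1
  | 0, _ + 1 => 0
  | n + 1, k + 1 => gauss n k + Polynomial.X ^ (k + 1) * gauss n (k + 1)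

open Polynomial Finset

lemma gauss_zero (m : ℕ) : gauss m 0 = 1 := by cases m <;> rfl

lemma tri_succ (k : ℕ) : (k+1)*k/2 = k*(k-1)/2 + k := by
  rcases k with _ | j
  · simp
  · have : (j+2)*(j+1) = (j+1)*j + 2*(j+1) := by ring
    rw [this, Nat.add_mul_div_left _ _ (by norm_num : 0 < 2)]
    simp [Nat.mul_div_cancel_left]

lemma gauss_eq_zero : ∀ m k : ℕ, m < k → gauss m k = 0 := by
  intro m
  induction m with
  | zero => intro k hk; cases k with
    | zero => omega
    | succ j => rfl
  | succ m ih =>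
    intro k hk
    cases k with
    | zero => omega
    | succ j =>
      show gauss m j + X ^ (j+1) * gauss m (j+1) = 0
      rw [ih j (by omega), ih (j+1) (by omega)]
      simp

def T (m c : ℕ) : Polynomial ℤ :=
  ∑ k ∈ range (m+1), (-1)^k * gauss m k * X ^ (k*(k-1)/2 + c*(m-k))

def U (m c : ℕ) : Polynomial ℤ :=
  ∑ k ∈ range (m+1), (-1)^k * gauss m k * X ^ (k*(k+1)/2 + c*(m-k))

lemma key (m c : ℕ) : T (m+1) c = (X^c - 1) * U m c := by
  have h1 : T (m+1) c =
      (∑ k ∈ range (m+1), ((-1 : Polynomial ℤ)^(k+1) * gauss m k * X ^ (k*(k+1)/2 + c*(m-k))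
        + (-1)^(k+1) * (X^(k+1) * gauss m (k+1)) * X ^ (k*(k+1)/2 + c*(m-k))))
      + X ^ (c*(m+1)) := by
    rw [T, Finset.sum_range_succ']
    congr 1
    · apply Finset.sum_congr rfl
      intro k hk
      rw [Finset.mem_range] at hk
      have he : (k+1)*((k+1)-1)/2 + c*((m+1)-(k+1)) = k*(k+1)/2 + c*(m-k) := by
        simp only [Nat.succ_sub_succ, Nat.sub_zero]
        rw [mul_comm k (k+1)]
      show (-1 : Polynomial ℤ)^(k+1) * gauss (m+1) (k+1) * X ^ ((k+1)*((k+1)-1)/2 + c*((m+1)-(k+1))) = _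
      rw [he]
      show (-1 : Polynomial ℤ)^(k+1) * (gauss m k + X^(k+1) * gauss m (k+1)) * X ^ (k*(k+1)/2 + c*(m-k)) = _
      ring
    · show (-1 : Polynomial ℤ)^0 * gauss (m+1) 0 * X ^ (0*(0-1)/2 + c*((m+1)-0)) = _
      rw [gauss_zero]
      simp
  have h2 : (∑ k ∈ range (m+1), ((-1 : Polynomial ℤ)^(k+1) * gauss m k * X ^ (k*(k+1)/2 + c*(m-k))))
      = - U m c := by
    rw [U, ← Finset.sum_neg_distrib]
    apply Finset.sum_congr rfl
    intro k _
    ring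
  have h3 : (∑ k ∈ range (m+1), ((-1 : Polynomial ℤ)^(k+1) * (X^(k+1) * gauss m (k+1)) * X ^ (k*(k+1)/2 + c*(m-k))))
      = X^c * U m c - X ^ (c*(m+1)) := by
    have hXU : X^c * U m c =
        (∑ k ∈ range m, (-1 : Polynomial ℤ)^(k+1) * gauss m (k+1) * X ^ ((k+1)*(k+2)/2 + c*(m-(k+1)) + c))
        + X ^ (c*(m+1)) := by
      rw [U, Finset.mul_sum, Finset.sum_range_succ']
      refine congrArg₂ (· + ·) ?_ ?_
      · apply Finset.sum_congr rfl
        intro k hk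
        rw [show (k+1)*((k+1)+1)/2 = (k+1)*(k+2)/2 by norm_num]
        conv_rhs => rw [pow_add (X : Polynomial ℤ) ((k+1)*(k+2)/2 + c*(m-(k+1))) c]
        ring
      · rw [gauss_zero]
        rw [show (0:ℕ)*(0+1)/2 + c*(m-0) = c*m by simp]
        rw [show c*(m+1) = c + c*m by ring, pow_add]
        ring
    rw [hXU]
    rw [Finset.sum_range_succ]
    rw [gauss_eq_zero m (m+1) (by omega)]
    simp only [mul_zero, zero_mul, mul_zero, add_zero]
    rw [add_sub_cancel_right]
    apply Finset.sum_congr rfl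
    intro k hk
    rw [Finset.mem_range] at hk
    have htri : (k+2)*(k+1)/2 = (k+1)*k/2 + (k+1) := tri_succ (k+1)
    have hc : c*(m-k) = c*(m-(k+1)) + c := by
      have h : m - k = (m - (k+1)) + 1 := by omega
      rw [h]; ring
    have he : (k+1) + (k*(k+1)/2 + c*(m-k)) = (k+1)*(k+2)/2 + c*(m-(k+1)) + c := by
      rw [mul_comm k (k+1), mul_comm (k+1) (k+2)]
      omega
    calc (-1 : Polynomial ℤ)^(k+1) * (X^(k+1) * gauss m (k+1)) * X ^ (k*(k+1)/2 + c*(m-k))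
        = (-1)^(k+1) * gauss m (k+1) * X ^ ((k+1) + (k*(k+1)/2 + c*(m-k))) := by
          rw [pow_add]; ring
      _ = _ := by rw [he]
  calc T (m+1) c = (- U m c + (X^c * U m c - X ^ (c*(m+1)))) + X ^ (c*(m+1)) := by
        rw [h1, Finset.sum_add_distrib, h2, h3]
    _ = (X^c - 1) * U m c := by ring

lemma U_eq (m c : ℕ) : U m (c+1) = X^m * T m c := by
  rw [U, T, Finset.mul_sum]
  apply Finset.sum_congr rfl
  intro k hk
  rw [Finset.mem_range] at hk
  have htri : (k+1)*k/2 = k*(k-1)/2 + k := tri_succ k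
  have hc : (c+1)*(m-k) = c*(m-k) + (m-k) := by ring
  have he : m + (k*(k-1)/2 + c*(m-k)) = k*(k+1)/2 + (c+1)*(m-k) := by
    rw [mul_comm k (k+1)]
    omega
  symm
  calc X^m * ((-1 : Polynomial ℤ)^k * gauss m k * X ^ (k*(k-1)/2 + c*(m-k)))
      = (-1)^k * gauss m k * X ^ (m + (k*(k-1)/2 + c*(m-k))) := by rw [pow_add]; ring
    _ = _ := by rw [he]

lemma T_zero : ∀ m c : ℕ, c < m → T m c = 0 := by
  intro m
  induction m with
  | zero => intro c hc; omega
  | succ m ih =>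
    intro c hc
    cases c with
    | zero => rw [key]; simp
    | succ c => rw [key, U_eq, ih c (by omega)]; ring

theorem even_odd_gauss_sum_eq (n : ℕ) (hn : 1 ≤ n) :
    ∑ k ∈ (Finset.range (2 * n + 1)).filter (fun k => Even k),
        gauss (2 * n) k * Polynomial.X ^ (n * (2 * n - k) + k * (k - 1) / 2) =
    ∑ k ∈ (Finset.range (2 * n + 1)).filter (fun k => Odd k),
        gauss (2 * n) k * Polynomial.X ^ (n * (2 * n - k) + k * (k - 1) / 2) := by
  have h0 : T (2*n) n = 0 := T_zero (2*n) n (by omega)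
  rw [T] at h0
  rw [← Finset.sum_filter_add_sum_filter_not (Finset.range (2*n+1)) (fun k => Even k)] at h0
  have he : ∑ k ∈ (Finset.range (2*n+1)).filter (fun k => Even k),
      (-1 : Polynomial ℤ)^k * gauss (2*n) k * X ^ (k*(k-1)/2 + n*(2*n-k)) =
      ∑ k ∈ (Finset.range (2*n+1)).filter (fun k => Even k),
        gauss (2*n) k * X ^ (n*(2*n-k) + k*(k-1)/2) := by
    apply Finset.sum_congr rfl
    intro k hk
    rw [Finset.mem_filter] at hk
    rw [hk.2.neg_one_pow, add_comm (k*(k-1)/2)]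
    ring
  have ho : ∑ k ∈ (Finset.range (2*n+1)).filter (fun k => ¬ Even k),
      (-1 : Polynomial ℤ)^k * gauss (2*n) k * X ^ (k*(k-1)/2 + n*(2*n-k)) =
      - ∑ k ∈ (Finset.range (2*n+1)).filter (fun k => Odd k),
        gauss (2*n) k * X ^ (n*(2*n-k) + k*(k-1)/2) := by
    rw [← Finset.sum_neg_distrib]
    apply Finset.sum_congr (Finset.filter_congr (fun k _ => by simp [Nat.not_even_iff_odd]))
    intro k hk
    rw [Finset.mem_filter] at hk
    rw [hk.2.neg_one_pow, add_comm (k*(k-1)/2)]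
    ring
  rw [he, ho] at h0
  linear_combination h0
end
end

section
/- Define formal power series sin_q(z) = sum_{n≥0} (-1)^n q^(n^2) z^(2n+1)/[2n+1]_q! and cos_q(z) = sum_{n≥0} (-1)^n q^(n^2) z^(2n)/[2n]_q!, with coefficients in the field of rational functions Q(q). Then sin_q(z)·sin_{1/q}(z) + cos_q(z)·cos_{1/q}(z) = 1, where sin_{1/q}, cos_{1/q} are obtained by substituting 1/q for q. -/
noncomputable section
open Finset PowerSeries

abbrev Fq : Type := RatFunc ℚ

/-- The variable `q` as element of the field of rational functions `ℚ(q)`. -/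
def qv : Fq := RatFunc.X

/-- The q-integer `[m]_q = 1 + q + ... + q^(m-1)`. -/
def qInt (x : Fq) (m : ℕ) : Fq := ∑ i ∈ Finset.range m, x ^ i

/-- The q-factorial `[m]_q! = [1]_q [2]_q ⋯ [m]_q`. -/
def qFact (x : Fq) (m : ℕ) : Fq := ∏ i ∈ Finset.range m, qInt x (i + 1)

lemma qv_ne_zero : qv ≠ 0 := RatFunc.X_ne_zero

lemma algMap_inj : Function.Injective (algebraMap (Polynomial ℚ) Fq) :=
  IsFractionRing.injective _ _

lemma qInt_eq (m : ℕ) :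
    qInt qv m = algebraMap (Polynomial ℚ) Fq (∑ i ∈ range m, Polynomial.X ^ i) := by
  simp [qInt, qv, map_sum, map_pow, RatFunc.algebraMap_X]

lemma qInt_ne_zero {m : ℕ} (hm : 1 ≤ m) : qInt qv m ≠ 0 := by
  rw [qInt_eq]
  intro h
  have h0 : (∑ i ∈ range m, Polynomial.X ^ i : Polynomial ℚ) = 0 := by
    apply algMap_inj; simpa using h
  have := congrArg (Polynomial.eval 1) h0
  simp [Polynomial.eval_finset_sum] at this
  omega

lemma qFact_ne_zero (m : ℕ) : qFact qv m ≠ 0 := by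
  refine Finset.prod_ne_zero_iff.mpr fun i _ => qInt_ne_zero (by omega)


-- triangular numbers
def cc : ℕ → ℕ
  | 0 => 0
  | (j+1) => cc j + j

lemma cc_cast_even (k : ℕ) : (cc (2*k) : ℤ) = 2*k*k - k := by
  induction k with
  | zero => simp [cc]
  | succ k ih =>
      have : 2*(k+1) = (2*k+1)+1 := by ring
      rw [this, cc, cc, Nat.cast_add, Nat.cast_add, ih]
      push_cast; ring

lemma cc_cast_odd (k : ℕ) : (cc (2*k+1) : ℤ) = 2*k*k + k := by
  rw [cc, Nat.cast_add, cc_cast_even]; push_cast; ring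

lemma qInt_add (a b : ℕ) : qInt qv (a+b) = qInt qv a + qv ^ a * qInt qv b := by
  simp only [qInt, Finset.sum_range_add, Finset.mul_sum]
  congr 1
  exact Finset.sum_congr rfl fun i _ => by rw [pow_add]

lemma qInt_inv (m : ℕ) : qInt qv⁻¹ m = (qv ^ (m-1))⁻¹ * qInt qv m := by
  rcases Nat.eq_zero_or_pos m with h | h
  · simp [h, qInt]
  have hq := qv_ne_zero
  rw [qInt, qInt, ← Finset.sum_range_reflect (fun i => qv ^ i) m]
  rw [Finset.mul_sum]
  refine Finset.sum_congr rfl fun i hi => ?_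
  rw [Finset.mem_range] at hi
  rw [pow_sub₀ _ hq (by omega)]
  field_simp
  rw [one_div, inv_pow, mul_comm, ← pow_sub₀ _ hq (by omega : i ≤ m),
    ← pow_succ', show m - 1 - i + 1 = m - i by omega]

lemma qFact_inv (m : ℕ) : qFact qv⁻¹ m = (qv ^ (cc m))⁻¹ * qFact qv m := by
  induction m with
  | zero => simp [qFact, cc]
  | succ m ih =>
      have e1 : qFact qv (m+1) = qFact qv m * qInt qv (m+1) := by
        rw [qFact, Finset.prod_range_succ, ← qFact]
      have e2 : qFact qv⁻¹ (m+1) = qFact qv⁻¹ m * qInt qv⁻¹ (m+1) := by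
        rw [qFact, Finset.prod_range_succ, ← qFact]
      have h1 : m + 1 - 1 = m := by omega
      rw [e2, ih, qInt_inv, e1, cc, pow_add, h1, mul_inv]
      ring

def qb : ℕ → ℕ → Fq
  | _, 0 => 1
  | 0, _+1 => 0
  | (m+1), (j+1) => qb m j + qv ^ (j+1) * qb m (j+1)

lemma qb_zero_right (m : ℕ) : qb m 0 = 1 := by cases m <;> rfl

lemma qb_eq_zero_of_lt : ∀ {m j : ℕ}, m < j → qb m j = 0 := by
  intro m
  induction m with
  | zero => intro j hj; rcases j with _|j; · omega
            rfl
  | succ m ih =>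
      intro j hj
      rcases j with _|j
      · omega
      rw [qb, ih (by omega), ih (by omega)]
      ring

lemma qb_self : ∀ m : ℕ, qb m m = 1 := by
  intro m
  induction m with
  | zero => rfl
  | succ m ih => rw [qb, ih, qb_eq_zero_of_lt (by omega)]; ring

lemma qFact_succ (k : ℕ) : qFact qv (k+1) = qFact qv k * qInt qv (k+1) := by
  rw [qFact, Finset.prod_range_succ, ← qFact]

lemma qFact_zero : qFact qv 0 = 1 := by simp [qFact]

lemma qb_mul_fact : ∀ m j : ℕ, j ≤ m →
    qb m j * qFact qv j * qFact qv (m-j) = qFact qv m := by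
  intro m
  induction m with
  | zero => intro j hj
            interval_cases j
            simp [qb_zero_right, qFact_zero]
  | succ m ih =>
      intro j hj
      rcases j with _|j
      · simp [qb_zero_right, Nat.sub_zero, qFact_zero]
      rcases Nat.lt_or_ge j m with hjm | hjm
      · have h1 : m + 1 - (j+1) = (m - j - 1) + 1 := by omega
        have key : qInt qv (m+1) = qInt qv (j+1) + qv ^ (j+1) * qInt qv (m-j) := by
          have e : m + 1 = (j+1) + (m-j) := by omega
          rw [e, qInt_add]
        have A := ih j (by omega)
        have B := ih (j+1) (by omega)
        rw [show m - j = (m-j-1)+1 by omega, qFact_succ (m-j-1),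
            show m - j - 1 + 1 = m - j by omega] at A
        rw [qFact_succ j, show m - (j+1) = m - j - 1 by omega] at B
        rw [qb, h1, qFact_succ (m-j-1), qFact_succ j, qFact_succ m, key,
            show m - j - 1 + 1 = m - j by omega]
        linear_combination qInt (qv) (j+1) * A + qv^(j+1) * qInt qv (m-j) * B
      · have hj' : j = m := by omega
        rw [hj', show m + 1 - (m+1) = 0 by omega, qb_self, qFact_zero]
        ring

theorem qbinom (m : ℕ) (t : Fq) :
    ∏ i ∈ range m, (1 + qv ^ i * t)
      = ∑ j ∈ range (m+1), qv ^ (cc j) * qb m j * t ^ j := by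
  induction m generalizing t with
  | zero => simp [cc, qb_zero_right]
  | succ m ih =>
      have step : ∏ i ∈ range (m+1), (1 + qv ^ i * t)
          = (1 + t) * ∏ i ∈ range m, (1 + qv ^ i * (qv * t)) := by
        rw [Finset.prod_range_succ' (fun i => 1 + qv ^ i * t) m]
        rw [mul_comm (1+t)]
        congr 1
        · refine Finset.prod_congr rfl fun i _ => ?_
          rw [pow_succ]
          ring
        · simp
      rw [step, ih (qv * t)]
      rw [Finset.sum_range_succ' (fun j => qv ^ (cc j) * qb (m+1) j * t ^ j) (m+1)]
      rw [Finset.mul_sum]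
      have split : ∀ j ∈ range (m+1), (1+t) * (qv^(cc j) * qb m j * (qv*t)^j)
          = (qv^(cc j + j) * qb m j * t^j) + (qv^(cc j + j) * qb m j * t^(j+1)) := by
        intro j _
        rw [mul_pow, pow_add]
        ring
      rw [Finset.sum_congr rfl split, Finset.sum_add_distrib]
      have gsplit : ∀ j ∈ range (m+1), qv^(cc (j+1)) * qb (m+1) (j+1) * t^(j+1)
          = qv^(cc j + j) * qb m j * t^(j+1)
            + qv^(cc j + j) * (qv^(j+1) * qb m (j+1)) * t^(j+1) := by
        intro j _
        rw [cc, qb]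
        ring
      rw [Finset.sum_congr rfl gsplit, Finset.sum_add_distrib]
      have ha : ∑ j ∈ range (m+1), qv^(cc j + j) * qb m j * t^j
          = (∑ j ∈ range m, qv^(cc j + j) * (qv^(j+1) * qb m (j+1)) * t^(j+1)) + 1 := by
        rw [Finset.sum_range_succ' (fun j => qv^(cc j + j) * qb m j * t^j) m]
        congr 1
        · refine Finset.sum_congr rfl fun j _ => ?_
          rw [cc, pow_add, pow_add, pow_add]
          ring
        · simp [cc, qb_zero_right]
      have hb : ∑ j ∈ range (m+1), qv^(cc j + j) * (qv^(j+1) * qb m (j+1)) * t^(j+1)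
          = ∑ j ∈ range m, qv^(cc j + j) * (qv^(j+1) * qb m (j+1)) * t^(j+1) := by
        rw [Finset.sum_range_succ, qb_eq_zero_of_lt (by omega)]
        ring
      rw [ha, hb]
      simp [cc, qb_zero_right]
      ring

lemma cast_pred_mul (d : ℕ) : ((d*(d-1) : ℕ) : ℤ) = (d:ℤ)*((d:ℤ)-1) := by
  rcases d with _|d
  · simp
  · simp only [Nat.succ_sub_one]
    push_cast
    ring

lemma sum_even_odd (f : ℕ → Fq) (n : ℕ) :
    ∑ i ∈ range (2*n+1), f i
      = (∑ k ∈ range (n+1), f (2*k)) + ∑ k ∈ range n, f (2*k+1) := by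
  induction n with
  | zero => simp
  | succ n ih =>
      rw [show 2*(n+1)+1 = (2*n+1)+1+1 by ring, Finset.sum_range_succ,
          Finset.sum_range_succ, ih, Finset.sum_range_succ (fun k => f (2*k)) (n+1),
          Finset.sum_range_succ (fun k => f (2*k+1)) n]
      rw [show 2*(n+1) = 2*n+1+1 by ring]
      ring

lemma one_add_qpow_ne (a : ℕ) : (1 : Fq) + qv ^ a ≠ 0 := by
  intro h
  have h2 : (1 : Fq) + qv ^ a
      = algebraMap (Polynomial ℚ) Fq (1 + Polynomial.X ^ a) := by
    simp [qv, map_add, map_pow, RatFunc.algebraMap_X]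
  rw [h2] at h
  have h0 : (1 + Polynomial.X ^ a : Polynomial ℚ) = 0 := by
    apply algMap_inj; simpa using h
  have hev := congrArg (Polynomial.eval 0) h0
  rcases Nat.eq_zero_or_pos a with ha | ha
  · subst ha; norm_num at hev
  · rw [Polynomial.eval_add, Polynomial.eval_one, Polynomial.eval_pow,
        Polynomial.eval_X, zero_pow (by omega)] at hev
    norm_num at hev

lemma key_s3 (n : ℕ) (hn : 1 ≤ n) :
    ∑ k ∈ range (n+1), qv ^ (k^2 + (n-k)*(n-k-1)) * qb (2*n) (2*k)
      = ∑ k ∈ range n, qv ^ (k^2 + (n-1-k)*(n-k)) * qb (2*n) (2*k+1) := by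
  have hq := qv_ne_zero
  set t1 : Fq := qv ^ ((1 : ℤ) - n) with ht1
  set t2 : Fq := qv ^ (-(n : ℤ)) with ht2
  have hvan : ∀ a : ℤ, ∀ i : ℕ, (i : ℤ) + a = 0 → i < 2*n →
      ∏ i ∈ range (2*n), (1 + qv ^ i * (-(qv ^ a))) = 0 := by
    intro a i hia hilt
    apply Finset.prod_eq_zero (Finset.mem_range.mpr hilt)
    have hone : qv ^ i * qv ^ a = 1 := by
      rw [← zpow_natCast qv i, ← zpow_add₀ hq, hia, zpow_zero]
    rw [mul_neg, hone]
    ring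
  have hv1 : ∏ i ∈ range (2*n), (1 + qv ^ i * (-t1)) = 0 :=
    hvan _ (n-1) (by omega) (by omega)
  have hv2 : ∏ i ∈ range (2*n), (1 + qv ^ i * (-t2)) = 0 :=
    hvan _ n (by omega) (by omega)
  have e1p := qbinom (2*n) t1
  have e1m := qbinom (2*n) (-t1)
  have e2p := qbinom (2*n) t2
  have e2m := qbinom (2*n) (-t2)
  rw [hv1] at e1m
  rw [hv2] at e2m
  have heven : ∑ k ∈ range (n+1), 2 * (qv ^ (cc (2*k)) * qb (2*n) (2*k) * t1 ^ (2*k))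
      = ∏ i ∈ range (2*n), (1 + qv ^ i * t1) := by
    have comb : ∑ j ∈ range (2*n+1), (qv ^ (cc j) * qb (2*n) j * t1 ^ j
          + qv ^ (cc j) * qb (2*n) j * (-t1) ^ j)
        = ∏ i ∈ range (2*n), (1 + qv ^ i * t1) := by
      rw [Finset.sum_add_distrib, ← e1p, ← e1m]
      ring
    rw [sum_even_odd (fun j => qv ^ (cc j) * qb (2*n) j * t1 ^ j
          + qv ^ (cc j) * qb (2*n) j * (-t1) ^ j) n] at comb
    rw [← comb]
    have hodd0 : ∑ k ∈ range n, (qv ^ (cc (2*k+1)) * qb (2*n) (2*k+1) * t1 ^ (2*k+1)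
          + qv ^ (cc (2*k+1)) * qb (2*n) (2*k+1) * (-t1) ^ (2*k+1)) = 0 := by
      refine Finset.sum_eq_zero fun k _ => ?_
      rw [Odd.neg_pow ⟨k, by ring⟩]
      ring
    rw [hodd0, add_zero]
    refine Finset.sum_congr rfl fun k _ => ?_
    rw [Even.neg_pow ⟨k, by ring⟩]
    ring
  have hodd : ∑ k ∈ range n, 2 * (qv ^ (cc (2*k+1)) * qb (2*n) (2*k+1) * t2 ^ (2*k+1))
      = ∏ i ∈ range (2*n), (1 + qv ^ i * t2) := by
    have comb : ∑ j ∈ range (2*n+1), (qv ^ (cc j) * qb (2*n) j * t2 ^ j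
          - qv ^ (cc j) * qb (2*n) j * (-t2) ^ j)
        = ∏ i ∈ range (2*n), (1 + qv ^ i * t2) := by
      rw [Finset.sum_sub_distrib, ← e2p, ← e2m]
      ring
    rw [sum_even_odd (fun j => qv ^ (cc j) * qb (2*n) j * t2 ^ j
          - qv ^ (cc j) * qb (2*n) j * (-t2) ^ j) n] at comb
    rw [← comb]
    have heven0 : ∑ k ∈ range (n+1), (qv ^ (cc (2*k)) * qb (2*n) (2*k) * t2 ^ (2*k)
          - qv ^ (cc (2*k)) * qb (2*n) (2*k) * (-t2) ^ (2*k)) = 0 := by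
      refine Finset.sum_eq_zero fun k _ => ?_
      rw [Even.neg_pow ⟨k, by ring⟩]
      ring
    rw [heven0, zero_add]
    refine Finset.sum_congr rfl fun k _ => ?_
    rw [Odd.neg_pow ⟨k, by ring⟩]
    ring
  have hshift : (∏ i ∈ range (2*n), (1 + qv ^ i * t1)) * (1 + qv ^ (-(n:ℤ)))
      = (∏ i ∈ range (2*n), (1 + qv ^ i * t2)) * (1 + qv ^ (n:ℤ)) := by
    have hg1 : ∀ i : ℕ, 1 + qv ^ i * t1 = 1 + qv ^ ((i:ℤ) + 1 - n) := by
      intro i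
      rw [ht1, ← zpow_natCast qv i, ← zpow_add₀ hq,
          show (i:ℤ) + (1 - (n:ℤ)) = (i:ℤ) + 1 - n by ring]
    have hg2 : ∀ i : ℕ, 1 + qv ^ i * t2 = 1 + qv ^ ((i:ℤ) - n) := by
      intro i
      rw [ht2, ← zpow_natCast qv i, ← zpow_add₀ hq,
          show (i:ℤ) + -(n:ℤ) = (i:ℤ) - n by ring]
    calc (∏ i ∈ range (2*n), (1 + qv ^ i * t1)) * (1 + qv ^ (-(n:ℤ)))
        = ∏ i ∈ range (2*n+1), (1 + qv ^ ((i:ℤ) - n)) := by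
          rw [Finset.prod_range_succ' (fun i => 1 + qv ^ ((i:ℤ) - n)) (2*n)]
          congr 1
          · refine Finset.prod_congr rfl fun i _ => ?_
            rw [hg1]
            congr 2 <;> push_cast <;> ring_nf
          · congr 2 <;> push_cast <;> ring_nf
      _ = (∏ i ∈ range (2*n), (1 + qv ^ i * t2)) * (1 + qv ^ (n:ℤ)) := by
          rw [Finset.prod_range_succ (fun i => 1 + qv ^ ((i:ℤ) - n)) (2*n)]
          congr 1
          · refine Finset.prod_congr rfl fun i _ => (hg2 i).symm
          · congr 2 <;> push_cast <;> ring_nf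
  have hne : (1 : Fq) + qv ^ (-(n:ℤ)) ≠ 0 := by
    intro h
    have hmul : qv ^ (n:ℤ) * ((1:Fq) + qv ^ (-(n:ℤ))) = qv ^ (n:ℤ) + 1 := by
      rw [mul_add, mul_one, ← zpow_add₀ hq]
      simp
    rw [h, mul_zero] at hmul
    have h2 := one_add_qpow_ne n
    rw [← zpow_natCast qv n] at h2
    exact h2 (by rw [add_comm]; exact hmul.symm)
  have hscale : qv ^ ((n:ℤ)*(n-1)) * ∏ i ∈ range (2*n), (1 + qv ^ i * t1)
      = qv ^ ((n:ℤ)*n) * ∏ i ∈ range (2*n), (1 + qv ^ i * t2) := by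
    have hmul : qv ^ ((n:ℤ)*(n-1)) * (1 + qv ^ ((n:ℤ)))
        = qv ^ ((n:ℤ)*n) * (1 + qv ^ (-(n:ℤ))) := by
      rw [mul_add, mul_add, mul_one, mul_one, ← zpow_add₀ hq, ← zpow_add₀ hq,
          show (n:ℤ)*(n-1) + n = (n:ℤ)*n by ring, show (n:ℤ)*n + -n = (n:ℤ)*(n-1) by ring]
      ring
    have h3 : (qv ^ ((n:ℤ)*(n-1)) * ∏ i ∈ range (2*n), (1 + qv ^ i * t1)) * (1 + qv ^ (-(n:ℤ)))
        = (qv ^ ((n:ℤ)*n) * ∏ i ∈ range (2*n), (1 + qv ^ i * t2)) * (1 + qv ^ (-(n:ℤ))) := by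
      calc (qv ^ ((n:ℤ)*(n-1)) * ∏ i ∈ range (2*n), (1 + qv ^ i * t1)) * (1 + qv ^ (-(n:ℤ)))
          = qv ^ ((n:ℤ)*(n-1)) * ((∏ i ∈ range (2*n), (1 + qv ^ i * t1)) * (1 + qv ^ (-(n:ℤ)))) := by
            ring
        _ = qv ^ ((n:ℤ)*(n-1)) * ((∏ i ∈ range (2*n), (1 + qv ^ i * t2)) * (1 + qv ^ (n:ℤ))) := by
            rw [hshift]
        _ = (qv ^ ((n:ℤ)*(n-1)) * (1 + qv ^ ((n:ℤ)))) * ∏ i ∈ range (2*n), (1 + qv ^ i * t2) := by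
            ring
        _ = (qv ^ ((n:ℤ)*n) * (1 + qv ^ (-(n:ℤ)))) * ∏ i ∈ range (2*n), (1 + qv ^ i * t2) := by
            rw [hmul]
        _ = (qv ^ ((n:ℤ)*n) * ∏ i ∈ range (2*n), (1 + qv ^ i * t2)) * (1 + qv ^ (-(n:ℤ))) := by
            ring
    exact mul_right_cancel₀ hne h3
  have hfinal : qv ^ ((n:ℤ)*(n-1)) * ∑ k ∈ range (n+1), 2 * (qv ^ (cc (2*k)) * qb (2*n) (2*k) * t1 ^ (2*k))
      = qv ^ ((n:ℤ)*n) * ∑ k ∈ range n, 2 * (qv ^ (cc (2*k+1)) * qb (2*n) (2*k+1) * t2 ^ (2*k+1)) := by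
    rw [heven, hodd, hscale]
  rw [Finset.mul_sum, Finset.mul_sum] at hfinal
  have lhs_eq : ∀ k ∈ range (n+1),
      qv ^ ((n:ℤ)*(n-1)) * (2 * (qv ^ (cc (2*k)) * qb (2*n) (2*k) * t1 ^ (2*k)))
        = 2 * (qv ^ (k^2 + (n-k)*(n-k-1)) * qb (2*n) (2*k)) := by
    intro k hk
    rw [Finset.mem_range] at hk
    have hk' : k ≤ n := by omega
    have hz : qv ^ ((n:ℤ)*(n-1)) * qv ^ (cc (2*k)) * t1 ^ (2*k)
        = qv ^ (k^2 + (n-k)*(n-k-1)) := by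
      rw [ht1, ← zpow_natCast qv (cc (2*k)), ← zpow_natCast qv (k^2 + (n-k)*(n-k-1)),
          ← zpow_natCast (qv ^ ((1:ℤ) - n)) (2*k), ← zpow_mul, ← zpow_add₀ hq, ← zpow_add₀ hq]
      congr 1
      rw [Nat.cast_add (k^2) ((n-k)*(n-k-1)), cast_pred_mul (n-k), cc_cast_even,
          Nat.cast_sub hk']
      push_cast
      ring
    calc qv ^ ((n:ℤ)*(n-1)) * (2 * (qv ^ (cc (2*k)) * qb (2*n) (2*k) * t1 ^ (2*k)))
        = 2 * ((qv ^ ((n:ℤ)*(n-1)) * qv ^ (cc (2*k)) * t1 ^ (2*k)) * qb (2*n) (2*k)) := by ring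
      _ = 2 * (qv ^ (k^2 + (n-k)*(n-k-1)) * qb (2*n) (2*k)) := by rw [hz]
  have rhs_eq : ∀ k ∈ range n,
      qv ^ ((n:ℤ)*n) * (2 * (qv ^ (cc (2*k+1)) * qb (2*n) (2*k+1) * t2 ^ (2*k+1)))
        = 2 * (qv ^ (k^2 + (n-1-k)*(n-k)) * qb (2*n) (2*k+1)) := by
    intro k hk
    rw [Finset.mem_range] at hk
    have hexp : k^2 + (n-1-k)*(n-k) = k^2 + (n-k)*(n-k-1) := by
      rw [show n-1-k = n-k-1 by omega]
      ring
    have hz : qv ^ ((n:ℤ)*n) * qv ^ (cc (2*k+1)) * t2 ^ (2*k+1)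
        = qv ^ (k^2 + (n-1-k)*(n-k)) := by
      rw [hexp, ht2, ← zpow_natCast qv (cc (2*k+1)), ← zpow_natCast qv (k^2 + (n-k)*(n-k-1)),
          ← zpow_natCast (qv ^ (-(n:ℤ))) (2*k+1), ← zpow_mul, ← zpow_add₀ hq, ← zpow_add₀ hq]
      congr 1
      rw [Nat.cast_add (k^2) ((n-k)*(n-k-1)), cast_pred_mul (n-k), cc_cast_odd,
          Nat.cast_sub (by omega : k ≤ n)]
      push_cast
      ring
    calc qv ^ ((n:ℤ)*n) * (2 * (qv ^ (cc (2*k+1)) * qb (2*n) (2*k+1) * t2 ^ (2*k+1)))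
        = 2 * ((qv ^ ((n:ℤ)*n) * qv ^ (cc (2*k+1)) * t2 ^ (2*k+1)) * qb (2*n) (2*k+1)) := by ring
      _ = 2 * (qv ^ (k^2 + (n-1-k)*(n-k)) * qb (2*n) (2*k+1)) := by rw [hz]
  rw [Finset.sum_congr rfl lhs_eq, Finset.sum_congr rfl rhs_eq] at hfinal
  rw [← Finset.mul_sum, ← Finset.mul_sum] at hfinal
  have h2 : (2:Fq) ≠ 0 := by
    intro h
    have h2' : (algebraMap (Polynomial ℚ) Fq) 2 = algebraMap (Polynomial ℚ) Fq 0 := by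
      rw [map_ofNat, map_zero]; exact_mod_cast h
    have := IsFractionRing.injective (Polynomial ℚ) Fq h2'
    norm_num at this
  exact mul_left_cancel₀ h2 hfinal


/-- `sin_q(z) = ∑ (-1)^n q^(n^2) z^(2n+1)/[2n+1]_q!`. -/
def qsin (x : Fq) : PowerSeries Fq :=
  PowerSeries.mk fun m =>
    if m % 2 = 1 then (-1 : Fq) ^ (m / 2) * x ^ ((m / 2) ^ 2) / qFact x m else 0

/-- `cos_q(z) = ∑ (-1)^n q^(n^2) z^(2n)/[2n]_q!`. -/
def qcos (x : Fq) : PowerSeries Fq :=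
  PowerSeries.mk fun m =>
    if m % 2 = 0 then (-1 : Fq) ^ (m / 2) * x ^ ((m / 2) ^ 2) / qFact x m else 0

lemma qb_ne_zero {m j : ℕ} (h : j ≤ m) : qb m j ≠ 0 := by
  intro h0
  have hh := qb_mul_fact m j h
  rw [h0, zero_mul, zero_mul] at hh
  exact qFact_ne_zero m hh.symm

lemma inv_fact_pair (n k : ℕ) (hk : k ≤ n) :
    (qFact qv (2*k))⁻¹ * (qFact qv (2*(n-k)))⁻¹ = qb (2*n) (2*k) * (qFact qv (2*n))⁻¹ := by
  have h := qb_mul_fact (2*n) (2*k) (by omega)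
  rw [show 2*n - 2*k = 2*(n-k) by omega] at h
  have hqb : qb (2*n) (2*k) ≠ 0 := qb_ne_zero (by omega)
  rw [← h, mul_inv, mul_inv, ← mul_assoc, ← mul_assoc, mul_inv_cancel₀ hqb, one_mul]

lemma inv_fact_pair_odd (n k : ℕ) (hk : k < n) :
    (qFact qv (2*k+1))⁻¹ * (qFact qv (2*(n-k)-1))⁻¹
      = qb (2*n) (2*k+1) * (qFact qv (2*n))⁻¹ := by
  have h := qb_mul_fact (2*n) (2*k+1) (by omega)
  rw [show 2*n - (2*k+1) = 2*(n-k)-1 by omega] at h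
  have hqb : qb (2*n) (2*k+1) ≠ 0 := qb_ne_zero (by omega)
  rw [← h, mul_inv, mul_inv, ← mul_assoc, ← mul_assoc, mul_inv_cancel₀ hqb, one_mul]

theorem q_sine_cosine_pair_1010 :
    qsin qv * qsin qv⁻¹ + qcos qv * qcos qv⁻¹ = 1 := by
  have hq := qv_ne_zero
  apply PowerSeries.ext
  intro N
  rw [map_add, PowerSeries.coeff_mul, PowerSeries.coeff_mul, ← Finset.sum_add_distrib,
      Finset.Nat.sum_antidiagonal_eq_sum_range_succ_mk, PowerSeries.coeff_one]
  simp only [Prod.fst, Prod.snd, Nat.succ_eq_add_one]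
  rcases Nat.even_or_odd N with ⟨n, hN⟩ | ⟨n, hN⟩
  · subst hN
    rcases Nat.eq_zero_or_pos n with hn | hn
    · subst hn
      norm_num [qsin, qcos, coeff_mk, qFact]
    · rw [if_neg (by omega)]
      rw [show n+n+1 = 2*n+1 by ring]
      rw [sum_even_odd (fun i =>
        (PowerSeries.coeff (R := Fq) i) (qsin qv) * (PowerSeries.coeff (R := Fq) (n+n-i)) (qsin qv⁻¹)
        + (PowerSeries.coeff (R := Fq) i) (qcos qv) * (PowerSeries.coeff (R := Fq) (n+n-i)) (qcos qv⁻¹)) n]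
      have hTe : ∀ k ∈ range (n+1),
          (PowerSeries.coeff (R := Fq) (2*k)) (qsin qv) * (PowerSeries.coeff (R := Fq) (n+n-2*k)) (qsin qv⁻¹)
          + (PowerSeries.coeff (R := Fq) (2*k)) (qcos qv) * (PowerSeries.coeff (R := Fq) (n+n-2*k)) (qcos qv⁻¹)
          = (-1)^n * (qFact qv (2*n))⁻¹
              * (qv ^ (k^2 + (n-k)*(n-k-1)) * qb (2*n) (2*k)) := by
        intro k hk
        rw [Finset.mem_range] at hk
        have hk' : k ≤ n := by omega
        have e1 : (PowerSeries.coeff (R := Fq) (2*k)) (qsin qv) = 0 := by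
          simp [qsin, coeff_mk, Nat.mul_mod_right]
        have e2 : (PowerSeries.coeff (R := Fq) (2*k)) (qcos qv)
            = (-1:Fq)^k * qv^(k^2) * (qFact qv (2*k))⁻¹ := by
          rw [qcos, coeff_mk, if_pos (by omega), Nat.mul_div_cancel_left k (by norm_num)]
          rw [div_eq_mul_inv]
        have e3 : (PowerSeries.coeff (R := Fq) (n+n-2*k)) (qcos qv⁻¹)
            = (-1:Fq)^(n-k) * (qv⁻¹)^((n-k)^2)
                * (qv^(cc (2*(n-k))) * (qFact qv (2*(n-k)))⁻¹) := by
          rw [qcos, coeff_mk, if_pos (by omega), show (n+n-2*k)/2 = n-k by omega,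
              show n+n-2*k = 2*(n-k) by omega, qFact_inv, div_eq_mul_inv, mul_inv,
              inv_inv]
        rw [e1, e2, e3, zero_mul, zero_add]
        have hsign : (-1:Fq)^k * (-1:Fq)^(n-k) = (-1)^n := by
          rw [← pow_add, show k + (n-k) = n by omega]
        have hz : qv^(k^2) * ((qv⁻¹)^((n-k)^2) * qv^(cc (2*(n-k))))
            = qv ^ (k^2 + (n-k)*(n-k-1)) := by
          rw [inv_pow, ← zpow_natCast qv (k^2), ← zpow_natCast qv ((n-k)^2), ← zpow_neg,
              ← zpow_natCast qv (cc (2*(n-k))), ← zpow_natCast qv (k^2 + (n-k)*(n-k-1)),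
              ← zpow_add₀ hq, ← zpow_add₀ hq]
          congr 1
          rw [cc_cast_even, Nat.cast_add (k^2) ((n-k)*(n-k-1)), cast_pred_mul (n-k)]
          push_cast [Nat.cast_sub hk']
          ring
        calc ((-1:Fq)^k * qv^(k^2) * (qFact qv (2*k))⁻¹)
              * ((-1:Fq)^(n-k) * (qv⁻¹)^((n-k)^2) * (qv^(cc (2*(n-k))) * (qFact qv (2*(n-k)))⁻¹))
            = ((-1:Fq)^k * (-1:Fq)^(n-k))
                * (qv^(k^2) * ((qv⁻¹)^((n-k)^2) * qv^(cc (2*(n-k)))))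
                * ((qFact qv (2*k))⁻¹ * (qFact qv (2*(n-k)))⁻¹) := by ring
          _ = (-1:Fq)^n * qv ^ (k^2 + (n-k)*(n-k-1)) * (qb (2*n) (2*k) * (qFact qv (2*n))⁻¹) := by
              rw [hsign, hz, inv_fact_pair n k hk']
          _ = (-1)^n * (qFact qv (2*n))⁻¹ * (qv ^ (k^2 + (n-k)*(n-k-1)) * qb (2*n) (2*k)) := by
              ring
      have hTo : ∀ k ∈ range n,
          (PowerSeries.coeff (R := Fq) (2*k+1)) (qsin qv) * (PowerSeries.coeff (R := Fq) (n+n-(2*k+1))) (qsin qv⁻¹)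
          + (PowerSeries.coeff (R := Fq) (2*k+1)) (qcos qv) * (PowerSeries.coeff (R := Fq) (n+n-(2*k+1))) (qcos qv⁻¹)
          = -((-1)^n * (qFact qv (2*n))⁻¹
              * (qv ^ (k^2 + (n-1-k)*(n-k)) * qb (2*n) (2*k+1))) := by
        intro k hk
        rw [Finset.mem_range] at hk
        have e1 : (PowerSeries.coeff (R := Fq) (2*k+1)) (qcos qv) = 0 := by
          simp [qcos, coeff_mk, Nat.mul_add_mod]
        have e2 : (PowerSeries.coeff (R := Fq) (2*k+1)) (qsin qv)
            = (-1:Fq)^k * qv^(k^2) * (qFact qv (2*k+1))⁻¹ := by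
          rw [qsin, coeff_mk, if_pos (by omega), show (2*k+1)/2 = k by omega]
          rw [div_eq_mul_inv]
        have e3 : (PowerSeries.coeff (R := Fq) (n+n-(2*k+1))) (qsin qv⁻¹)
            = (-1:Fq)^(n-1-k) * (qv⁻¹)^((n-1-k)^2)
                * (qv^(cc (2*(n-k)-1)) * (qFact qv (2*(n-k)-1))⁻¹) := by
          rw [qsin, coeff_mk, if_pos (by omega), show (n+n-(2*k+1))/2 = n-1-k by omega,
              show n+n-(2*k+1) = 2*(n-k)-1 by omega, qFact_inv, div_eq_mul_inv, mul_inv,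
              inv_inv]
        rw [e1, e3, e2, zero_mul, add_zero]
        have hsign : (-1:Fq)^k * (-1:Fq)^(n-1-k) = -(-1:Fq)^n := by
          have h1 : (-1:Fq)^n = (-1:Fq)^(k + (n-1-k) + 1) := by
            rw [show k + (n-1-k) + 1 = n by omega]
          rw [← pow_add, h1, pow_succ]
          ring
        have hz : qv^(k^2) * ((qv⁻¹)^((n-1-k)^2) * qv^(cc (2*(n-k)-1)))
            = qv ^ (k^2 + (n-1-k)*(n-k)) := by
          rw [show 2*(n-k)-1 = 2*(n-k-1)+1 by omega]
          rw [inv_pow, ← zpow_natCast qv (k^2), ← zpow_natCast qv ((n-1-k)^2), ← zpow_neg,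
              ← zpow_natCast qv (cc (2*(n-k-1)+1)), ← zpow_natCast qv (k^2 + (n-1-k)*(n-k)),
              ← zpow_add₀ hq, ← zpow_add₀ hq]
          congr 1
          rw [cc_cast_odd]
          have hc : ((k^2 + (n-1-k)*(n-k) : ℕ) : ℤ)
              = (k:ℤ)^2 + ((n:ℤ)-1-k)*((n:ℤ)-k) := by
            rw [Nat.cast_add (k^2) ((n-1-k)*(n-k)), Nat.cast_mul,
                Nat.cast_sub (by omega : k ≤ n - 1), Nat.cast_sub (by omega : k ≤ n),
                Nat.cast_sub (by omega : 1 ≤ n)]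
            push_cast
            ring
          rw [hc]
          push_cast [Nat.cast_sub (show k ≤ n-1 by omega), Nat.cast_sub (show 1 ≤ n by omega),
            Nat.cast_sub (show k ≤ n by omega), Nat.cast_sub (show 1 ≤ n-k by omega)]
          ring
        calc ((-1:Fq)^k * qv^(k^2) * (qFact qv (2*k+1))⁻¹)
              * ((-1:Fq)^(n-1-k) * (qv⁻¹)^((n-1-k)^2) * (qv^(cc (2*(n-k)-1)) * (qFact qv (2*(n-k)-1))⁻¹))
            = ((-1:Fq)^k * (-1:Fq)^(n-1-k))
                * (qv^(k^2) * ((qv⁻¹)^((n-1-k)^2) * qv^(cc (2*(n-k)-1))))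
                * ((qFact qv (2*k+1))⁻¹ * (qFact qv (2*(n-k)-1))⁻¹) := by ring
          _ = (-(-1:Fq)^n) * qv ^ (k^2 + (n-1-k)*(n-k)) * (qb (2*n) (2*k+1) * (qFact qv (2*n))⁻¹) := by
              rw [hsign, hz, inv_fact_pair_odd n k hk]
          _ = -((-1)^n * (qFact qv (2*n))⁻¹ * (qv ^ (k^2 + (n-1-k)*(n-k)) * qb (2*n) (2*k+1))) := by
              ring
      rw [Finset.sum_congr rfl hTe, Finset.sum_congr rfl hTo]
      rw [← Finset.mul_sum, Finset.sum_neg_distrib, ← Finset.mul_sum]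
      rw [key_s3 n hn]
      ring
  · subst hN
    rw [if_neg (by omega)]
    refine Finset.sum_eq_zero fun i hi => ?_
    rw [Finset.mem_range] at hi
    have hpar : i % 2 = 0 ∨ i % 2 = 1 := by omega
    rcases hpar with h1 | h1
    · have h2 : (2*n+1-i) % 2 = 1 := by omega
      simp [qsin, qcos, coeff_mk, h1, h2]
    · have h2 : (2*n+1-i) % 2 = 0 := by omega
      simp [qsin, qcos, coeff_mk, h1, h2]
end
end

section
/- For every natural number n, sum_{k=0}^{n} (-1)^k q^(k(k-1)/2) / ((q;q)_k (q^2;q^2)_{n-k}) = (-1)^n q^(n^2) / (q^2;q^2)_n, as an identity of rational functions in q. -/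
noncomputable section
open Finset PowerSeries

/-- The q-Pochhammer symbol `(x;r)_m = (1-x)(1-xr)⋯(1-xr^(m-1))`. -/
def qPoch (x r : Fq) (m : ℕ) : Fq := ∏ j ∈ Finset.range m, (1 - x * r ^ j)


lemma qv_pow_ne_one (t : ℕ) : qv ^ (t + 1) ≠ 1 := by
  intro h
  have h2 : (algebraMap (Polynomial ℚ) Fq) (Polynomial.X ^ (t + 1)) =
      (algebraMap (Polynomial ℚ) Fq) 1 := by
    simpa [map_pow, RatFunc.algebraMap_X, qv] using h
  have h3 := RatFunc.algebraMap_injective ℚ h2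
  have := congrArg Polynomial.natDegree h3
  simp [Polynomial.natDegree_X_pow] at this

lemma one_sub_qv_pow_ne (t : ℕ) : (1 : Fq) - qv ^ (t + 1) ≠ 0 := by
  rw [sub_ne_zero]
  exact fun h => qv_pow_ne_one t h.symm

lemma poch1_succ (m : ℕ) : qPoch qv qv (m + 1) = qPoch qv qv m * (1 - qv ^ (m + 1)) := by
  rw [qPoch, Finset.prod_range_succ, ← qPoch]
  ring

lemma poch2_succ (m : ℕ) : qPoch (qv ^ 2) (qv ^ 2) (m + 1)
    = qPoch (qv ^ 2) (qv ^ 2) m * ((1 - qv ^ (m + 1)) * (1 + qv ^ (m + 1))) := by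
  rw [qPoch, Finset.prod_range_succ, ← qPoch]
  congr 1
  have h : (qv ^ 2) * (qv ^ 2) ^ m = qv ^ (m + 1) * qv ^ (m + 1) := by
    rw [← pow_mul, ← pow_add, ← pow_add]
    congr 1
    omega
  rw [h]; ring

lemma P1_ne (m : ℕ) : qPoch qv qv m ≠ 0 := by
  induction m with
  | zero => simp [qPoch]
  | succ m ih => rw [poch1_succ]; exact mul_ne_zero ih (one_sub_qv_pow_ne m)

lemma P2_ne (m : ℕ) : qPoch (qv ^ 2) (qv ^ 2) m ≠ 0 := by
  induction m with
  | zero => simp [qPoch]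
  | succ m ih =>
    rw [poch2_succ]
    refine mul_ne_zero ih (mul_ne_zero (one_sub_qv_pow_ne m) ?_)
    intro h
    have : qv ^ (2 * (m + 1)) = 1 := by
      have : qv ^ (m+1) = -1 := by linear_combination h
      rw [two_mul, pow_add, this]; ring
    have h2 : 2 * (m+1) = (2*m+1) + 1 := by omega
    rw [h2] at this
    exact qv_pow_ne_one _ this

def gb : ℕ → ℕ → Fq
  | 0, 0 => 1
  | 0, _ + 1 => 0
  | _ + 1, 0 => 1
  | n + 1, k + 1 => gb n k + qv ^ (k + 1) * gb n (k + 1)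

lemma gb_zero_right (n : ℕ) : gb n 0 = 1 := by cases n <;> rfl

lemma gb_eq_zero : ∀ {n k : ℕ}, n < k → gb n k = 0
  | 0, _ + 1, _ => rfl
  | n + 1, k + 1, h => by
      show gb n k + qv ^ (k + 1) * gb n (k + 1) = 0
      rw [gb_eq_zero (by omega), gb_eq_zero (by omega)]
      ring

lemma gb_self : ∀ n, gb n n = 1
  | 0 => rfl
  | n + 1 => by
      show gb n n + qv ^ (n + 1) * gb n (n + 1) = 1
      rw [gb_self n, gb_eq_zero (by omega)]
      ring

-- Newton interpolation at q-power nodes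
lemma lemA : ∀ (n : ℕ) (y : Fq),
    ∑ k ∈ Finset.range (n + 1), gb n k * ∏ i ∈ Finset.range k, (y - qv ^ i) = y ^ n := by
  intro n
  induction n with
  | zero => intro y; simp [gb]
  | succ n ih =>
    intro y
    rw [Finset.sum_range_succ']
    have e1 : ∀ i, gb (n + 1) (i + 1) = gb n i + qv ^ (i + 1) * gb n (i + 1) := fun i => rfl
    simp only [e1, add_mul, Finset.sum_add_distrib]
    have h2 : ∑ i ∈ Finset.range (n + 1),
        qv ^ (i + 1) * gb n (i + 1) * ∏ j ∈ Finset.range (i + 1), (y - qv ^ j)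
        = ∑ i ∈ Finset.range n,
        qv ^ (i + 1) * gb n (i + 1) * ∏ j ∈ Finset.range (i + 1), (y - qv ^ j) := by
      rw [Finset.sum_range_succ, gb_eq_zero (by omega)]
      ring
    have h3 : (∑ i ∈ Finset.range n,
        qv ^ (i + 1) * gb n (i + 1) * ∏ j ∈ Finset.range (i + 1), (y - qv ^ j))
        + gb (n + 1) 0 * ∏ j ∈ Finset.range 0, (y - qv ^ j)
        = ∑ k ∈ Finset.range (n + 1), qv ^ k * gb n k * ∏ j ∈ Finset.range k, (y - qv ^ j) := by
      rw [Finset.sum_range_succ' (fun k => qv ^ k * gb n k * ∏ j ∈ Finset.range k, (y - qv ^ j)) n]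
      simp [gb_zero_right]
    rw [h2, add_assoc, h3, ← Finset.sum_add_distrib]
    have h4 : ∀ k ∈ Finset.range (n + 1),
        gb n k * ∏ i ∈ Finset.range (k + 1), (y - qv ^ i)
        + qv ^ k * gb n k * ∏ j ∈ Finset.range k, (y - qv ^ j)
        = y * (gb n k * ∏ j ∈ Finset.range k, (y - qv ^ j)) := by
      intro k _
      rw [Finset.prod_range_succ]
      ring
    rw [Finset.sum_congr rfl h4, ← Finset.mul_sum, ih]
    ring

lemma gb_succ_succ (n k : ℕ) : gb (n + 1) (k + 1) = gb n k + qv ^ (k + 1) * gb n (k + 1) := rfl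

lemma qPoch_zero (x r : Fq) : qPoch x r 0 = 1 := by simp [qPoch]

-- H1
lemma gb_mul_poch : ∀ n k, k ≤ n → gb n k * (qPoch qv qv k * qPoch qv qv (n - k)) = qPoch qv qv n := by
  intro n
  induction n with
  | zero => intro k hk; interval_cases k; simp [gb_zero_right, qPoch_zero]
  | succ n ih =>
    intro k hk
    match k with
    | 0 => simp [gb_zero_right, qPoch_zero]
    | k + 1 =>
      rw [gb_succ_succ]
      rcases Nat.lt_or_ge k n with h | h
      · set m := n - (k + 1) with hm
        have e2 : n - k = m + 1 := by omega
        have h1 := ih k (by omega)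
        have h2 := ih (k + 1) (by omega)
        rw [e2] at h1
        have e1 : n + 1 - (k + 1) = m + 1 := by omega
        rw [← hm] at h2
        rw [poch1_succ m] at h1
        rw [poch1_succ k] at h2
        rw [e1, poch1_succ m, poch1_succ k, poch1_succ n]
        have hq : qv ^ (k + 1) * qv ^ (m + 1) = qv ^ (n + 1) := by
          rw [← pow_add]; congr 1; omega
        rw [← hq]
        linear_combination (1 - qv ^ (k + 1)) * h1 + qv ^ (k + 1) * (1 - qv ^ (m + 1)) * h2
      · have hkn : k = n := by omega
        subst hkn
        rw [gb_self, gb_eq_zero (by omega)]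
        simp [qPoch_zero]
-- H2
lemma H2 (n : ℕ) : ∀ k, k ≤ n → qPoch (qv ^ 2) (qv ^ 2) n * qPoch qv qv (n - k)
    = qPoch qv qv n * qPoch (qv ^ 2) (qv ^ 2) (n - k) * ∏ i ∈ Finset.range k, (1 + qv ^ (n - i)) := by
  intro k
  induction k with
  | zero => intro _; simp; ring
  | succ k ihk =>
    intro hk
    have IH := ihk (by omega)
    set m := n - (k + 1) with hm
    have e : n - k = m + 1 := by omega
    rw [e] at IH
    rw [Finset.prod_range_succ, e]
    apply mul_right_cancel₀ (one_sub_qv_pow_ne m)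
    rw [poch1_succ, poch2_succ] at IH
    linear_combination IH

-- H3
lemma H3 (n : ℕ) : ∀ k, k ≤ n → qv ^ (k * (k - 1) / 2) * ∏ i ∈ Finset.range k, (1 + qv ^ (n - i))
    = ∏ i ∈ Finset.range k, (qv ^ n + qv ^ i) := by
  intro k hk
  have hfac : ∀ i ∈ Finset.range k, qv ^ n + qv ^ i = qv ^ i * (1 + qv ^ (n - i)) := by
    intro i hi
    simp only [Finset.mem_range] at hi
    have : qv ^ i * qv ^ (n - i) = qv ^ n := by rw [← pow_add]; congr 1; omega
    rw [mul_add, mul_one, this]; ring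
  rw [Finset.prod_congr rfl hfac, Finset.prod_mul_distrib, Finset.prod_pow_eq_pow_sum]
  congr 2
  rw [Finset.sum_range_id]

lemma prod_neg_aux (k : ℕ) (f : ℕ → Fq) :
    ∏ i ∈ Finset.range k, (-(f i)) = (-1) ^ k * ∏ i ∈ Finset.range k, f i := by
  induction k with
  | zero => simp
  | succ k ih => rw [Finset.prod_range_succ, Finset.prod_range_succ, ih]; ring

theorem euler_type_sum (n : ℕ) :
    ∑ k ∈ Finset.range (n + 1),
      (-1 : Fq) ^ k * qv ^ (k * (k - 1) / 2) /
        (qPoch qv qv k * qPoch (qv ^ 2) (qv ^ 2) (n - k)) =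
    (-1 : Fq) ^ n * qv ^ (n ^ 2) / qPoch (qv ^ 2) (qv ^ 2) n := by
  have key : ∀ k ∈ Finset.range (n + 1),
      (-1 : Fq) ^ k * qv ^ (k * (k - 1) / 2) /
        (qPoch qv qv k * qPoch (qv ^ 2) (qv ^ 2) (n - k))
      = (gb n k * ∏ i ∈ Finset.range k, (-qv ^ n - qv ^ i)) / qPoch (qv ^ 2) (qv ^ 2) n := by
    intro k hk
    simp only [Finset.mem_range] at hk
    have hkn : k ≤ n := by omega
    rw [div_eq_div_iff (mul_ne_zero (P1_ne k) (P2_ne (n - k))) (P2_ne n)]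
    apply mul_right_cancel₀ (P1_ne (n - k))
    have hneg : ∏ i ∈ Finset.range k, (-qv ^ n - qv ^ i)
        = (-1) ^ k * ∏ i ∈ Finset.range k, (qv ^ n + qv ^ i) := by
      rw [← prod_neg_aux]
      exact Finset.prod_congr rfl fun i _ => by ring
    rw [hneg]
    have h1 := gb_mul_poch n k hkn
    have h2 := H2 n k hkn
    have h3 := H3 n k hkn
    linear_combination ((-1 : Fq)) ^ k * qv ^ (k * (k - 1) / 2) * h2
      + (-1 : Fq) ^ k * qPoch qv qv n * qPoch (qv ^ 2) (qv ^ 2) (n - k) * h3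
      - (-1 : Fq) ^ k * (∏ i ∈ Finset.range k, (qv ^ n + qv ^ i)) *
          qPoch (qv ^ 2) (qv ^ 2) (n - k) * h1
  rw [Finset.sum_congr rfl key, ← Finset.sum_div]
  have hA := lemA n (-qv ^ n)
  have hprod : ∀ k ∈ Finset.range (n + 1),
      gb n k * ∏ i ∈ Finset.range k, (-qv ^ n - qv ^ i)
      = gb n k * ∏ i ∈ Finset.range k, ((-qv ^ n) - qv ^ i) := fun k _ => rfl
  rw [lemA n (-qv ^ n)]
  congr 1
  rw [neg_pow, ← pow_mul]
  congr 2
  exact (sq n).symm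
end
end

section
/- For every natural number n, sum_{k=0}^{n} (-1)^k q^(2n-k) q^(k(k-1)/2) / ((q;q)_k (q^2;q^2)_{n-k}) = (-1)^n q^(n^2) / (q^2;q^2)_n, as an identity of rational functions in q. Combining with the companion identity, sum_{k=0}^{n} (-1)^k (1 - q^(2n-k)) q^(k(k-1)/2) / ((q;q)_k (q^2;q^2)_{n-k}) = 0. -/
noncomputable section
open Finset PowerSeries

namespace EulerAux

lemma tri_succ (k : ℕ) : (k+1)*((k+1)-1)/2 = k*(k-1)/2 + k := by
  rw [← Nat.choose_two_right, ← Nat.choose_two_right, Nat.choose_succ_succ]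
  simp [Nat.choose_one_right, Nat.add_comm]

lemma qv_pow_ne_one (s : ℕ) (hs : s ≠ 0) : qv ^ s ≠ 1 := by
  intro h
  have h2 : (algebraMap (Polynomial ℚ) Fq) (Polynomial.X ^ s) = algebraMap (Polynomial ℚ) Fq 1 := by
    simpa [qv, RatFunc.algebraMap_X] using h
  have := (RatFunc.algebraMap_injective ℚ) h2
  have := congrArg Polynomial.natDegree this
  simp [Polynomial.natDegree_X_pow] at this
  exact hs this

lemma one_sub_ne (s : ℕ) (hs : s ≠ 0) : (1 : Fq) - qv ^ s ≠ 0 := by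
  intro h
  exact qv_pow_ne_one s hs (by linear_combination -h)

def P (k : ℕ) : Fq := qPoch qv qv k
def Q (m : ℕ) : Fq := qPoch (qv ^ 2) (qv ^ 2) m

lemma P_succ (k : ℕ) : P (k + 1) = P k * (1 - qv ^ (k + 1)) := by
  simp [P, qPoch, Finset.prod_range_succ, pow_succ, mul_comm]

lemma Q_succ (m : ℕ) : Q (m + 1) = Q m * (1 - qv ^ (2 * m + 2)) := by
  have : qv ^ 2 * (qv ^ 2) ^ m = qv ^ (2 * m + 2) := by ring
  simp [Q, qPoch, Finset.prod_range_succ, this]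

lemma P_zero : P 0 = 1 := by simp [P, qPoch]
lemma Q_zero : Q 0 = 1 := by simp [Q, qPoch]

lemma P_ne (k : ℕ) : P k ≠ 0 := by
  induction k with
  | zero => simp [P_zero]
  | succ k ih => rw [P_succ]; exact mul_ne_zero ih (one_sub_ne _ (by omega))

lemma Q_ne (m : ℕ) : Q m ≠ 0 := by
  induction m with
  | zero => simp [Q_zero]
  | succ m ih => rw [Q_succ]; exact mul_ne_zero ih (one_sub_ne _ (by omega))

def A (n : ℕ) : Fq :=
  ∑ k ∈ Finset.range (n + 1), (-1 : Fq) ^ k * qv ^ (k * (k - 1) / 2) / (P k * Q (n - k))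

def B (n : ℕ) : Fq :=
  ∑ k ∈ Finset.range (n + 1),
    (-1 : Fq) ^ k * qv ^ (2 * n - k) * qv ^ (k * (k - 1) / 2) / (P k * Q (n - k))

/-- telescoping: the companion sum vanishes -/
lemma companion (n : ℕ) :
    ∑ k ∈ Finset.range (n + 1),
      (-1 : Fq) ^ k * (1 - qv ^ (2 * n - k)) * qv ^ (k * (k - 1) / 2) / (P k * Q (n - k)) = 0 := by
  rcases Nat.eq_zero_or_pos n with h | h
  · subst h; simp
  set H : ℕ → Fq := fun k =>
    (-1 : Fq) ^ k * (1 - qv ^ k) * qv ^ (k * (k - 1) / 2) / (P k * Q (n - k)) with hH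
  have step : ∀ k < n,
      (-1 : Fq) ^ k * (1 - qv ^ (2 * n - k)) * qv ^ (k * (k - 1) / 2) / (P k * Q (n - k))
        = H k - H (k + 1) := by
    intro k hk
    obtain ⟨m, hm⟩ : ∃ m, n = k + 1 + m := ⟨n - k - 1, by omega⟩
    subst hm
    have e1 : 2 * (k + 1 + m) - k = k + 2 * m + 2 := by omega
    have e2 : k + 1 + m - k = m + 1 := by omega
    have e3 : k + 1 + m - (k + 1) = m := by omega
    have e4 := tri_succ k
    rw [hH]
    simp only [e1, e2, e3, e4]
    rw [Q_succ, P_succ]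
    have h1 := P_ne k
    have h2 := Q_ne m
    have h3 := one_sub_ne (k + 1) (by omega)
    have h4 := one_sub_ne (2 * m + 2) (by omega)
    field_simp
    ring
  have last : (-1 : Fq) ^ n * (1 - qv ^ (2 * n - n)) * qv ^ (n * (n - 1) / 2) / (P n * Q (n - n))
      = H n := by
    have e : 2 * n - n = n := by omega
    simp [hH, e]
  rw [Finset.sum_range_succ]
  rw [Finset.sum_congr rfl (fun k hk => step k (Finset.mem_range.mp hk)), last,
    Finset.sum_range_sub' H]
  have : H 0 = 0 := by simp [hH]
  rw [this]; ring

lemma A_eq_B (n : ℕ) : A n = B n := by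
  have h := companion n
  have : ∑ k ∈ Finset.range (n + 1),
      ((-1 : Fq) ^ k * qv ^ (k * (k - 1) / 2) / (P k * Q (n - k))
        - (-1 : Fq) ^ k * qv ^ (2 * n - k) * qv ^ (k * (k - 1) / 2) / (P k * Q (n - k))) = 0 := by
    rw [← h]
    refine Finset.sum_congr rfl fun k hk => ?_
    ring
  rw [Finset.sum_sub_distrib] at this
  have := sub_eq_zero.mp this
  exact this

lemma B_rec (n : ℕ) :
    B (n + 1) - qv ^ (2 * (n + 1)) * A (n + 1) = -qv ^ (2 * n + 1) * A n := by
  have lhs : B (n + 1) - qv ^ (2 * (n + 1)) * A (n + 1)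
      = ∑ k ∈ Finset.range (n + 2),
        ((-1 : Fq) ^ k * qv ^ (2 * (n + 1) - k) * qv ^ (k * (k - 1) / 2) / (P k * Q (n + 1 - k))
          - qv ^ (2 * (n + 1)) * ((-1 : Fq) ^ k * qv ^ (k * (k - 1) / 2) / (P k * Q (n + 1 - k)))) := by
    rw [B, A, Finset.sum_sub_distrib, Finset.mul_sum]
  have rhs : -qv ^ (2 * n + 1) * A n
      = ∑ k ∈ Finset.range (n + 1),
        (-qv ^ (2 * n + 1) * ((-1 : Fq) ^ k * qv ^ (k * (k - 1) / 2) / (P k * Q (n - k)))) := by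
    rw [A, Finset.mul_sum]
  rw [lhs, rhs, Finset.sum_range_succ']
  have h0 : (-1 : Fq) ^ 0 * qv ^ (2 * (n + 1) - 0) * qv ^ (0 * (0 - 1) / 2) / (P 0 * Q (n + 1 - 0))
      - qv ^ (2 * (n + 1)) * ((-1 : Fq) ^ 0 * qv ^ (0 * (0 - 1) / 2) / (P 0 * Q (n + 1 - 0))) = 0 := by
    simp [P_zero]; ring
  rw [h0, add_zero]
  refine Finset.sum_congr rfl fun k hk => ?_
  have hk' : k < n + 1 := Finset.mem_range.mp hk
  obtain ⟨j, hj⟩ : ∃ j, n = k + j := ⟨n - k, by omega⟩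
  subst hj
  have e1 : 2 * (k + j + 1) - (k + 1) = k + 2 * j + 1 := by omega
  have e2 : k + j + 1 - (k + 1) = j := by omega
  have e3 : k + j - k = j := by omega
  have e4 := tri_succ k
  have e5 : 2 * (k + j + 1) = k + 2 * j + 1 + (k + 1) := by omega
  rw [e1, e2, e3, e4, e5, P_succ]
  have h1 := P_ne k
  have h2 := Q_ne j
  have h3 := one_sub_ne (k + 1) (by omega)
  field_simp
  ring

lemma A_eq (n : ℕ) : A n = (-1 : Fq) ^ n * qv ^ (n ^ 2) / Q n := by
  induction n with
  | zero => simp [A, P_zero, Q_zero]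
  | succ n ih =>
    have hr := B_rec n
    rw [← A_eq_B] at hr
    have hA : A (n + 1) * (1 - qv ^ (2 * n + 2)) = -qv ^ (2 * n + 1) * A n := by
      have e : 2 * (n + 1) = 2 * n + 2 := by omega
      rw [e] at hr
      linear_combination hr
    rw [ih] at hA
    have hq := Q_ne n
    have h4 := one_sub_ne (2 * n + 2) (by omega)
    rw [Q_succ]
    have e : (n + 1) ^ 2 = n ^ 2 + (2 * n + 1) := by ring
    rw [e, pow_add, pow_succ]
    field_simp at hA ⊢
    linear_combination hA

end EulerAux

theorem euler_type_sum_companion (n : ℕ) :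
    (∑ k ∈ Finset.range (n + 1),
        (-1 : Fq) ^ k * qv ^ (2 * n - k) * qv ^ (k * (k - 1) / 2) /
          (qPoch qv qv k * qPoch (qv ^ 2) (qv ^ 2) (n - k)) =
      (-1 : Fq) ^ n * qv ^ (n ^ 2) / qPoch (qv ^ 2) (qv ^ 2) n) ∧
    (∑ k ∈ Finset.range (n + 1),
        (-1 : Fq) ^ k * (1 - qv ^ (2 * n - k)) * qv ^ (k * (k - 1) / 2) /
          (qPoch qv qv k * qPoch (qv ^ 2) (qv ^ 2) (n - k)) = 0) := by
  constructor
  · exact (EulerAux.A_eq_B n).symm.trans (EulerAux.A_eq n)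
  · exact EulerAux.companion n
end
end

section
/- Andrews–Gessel divisibility lemma: for all natural numbers n and k with 1 ≤ k ≤ n, the rational function C(2n+1,2k)_q · (prod_{i=1}^{k}(1+q^i)) / (prod_{i=n-k+1}^{n}(1+q^i)) is a polynomial in q, where C(2n+1,2k)_q is the Gaussian binomial coefficient. -/
noncomputable section
open Finset PowerSeries

local notation "PX" => (Polynomial.X : Polynomial ℤ)

lemma gauss_eq_zero_of_lt : ∀ {m j : ℕ}, m < j → gauss m j = 0
  | 0, _+1, _ => rfl
  | m+1, j+1, h => by
      have h1 : gauss m j = 0 := gauss_eq_zero_of_lt (by omega)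
      have h2 : gauss m (j+1) = 0 := gauss_eq_zero_of_lt (by omega)
      show gauss m j + Polynomial.X ^ (j+1) * gauss m (j+1) = 0
      rw [h1, h2]; ring

lemma gauss_mul (m : ℕ) : ∀ j : ℕ, j ≤ m →
    gauss m j * ∏ i ∈ Icc 1 j, (PX ^ i - 1)
      = ∏ i ∈ Icc (m - j + 1) m, (PX ^ i - 1) := by
  induction m with
  | zero =>
      intro j hj
      interval_cases j
      simp [gauss]
  | succ m ih =>
      intro j hj
      cases j with
      | zero => simp [gauss]
      | succ j =>
        have hjm : j ≤ m := by omega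
        have hrec : gauss (m+1) (j+1) = gauss m j + Polynomial.X ^ (j+1) * gauss m (j+1) := rfl
        have ihj := ih j hjm
        have hsplit1 : (∏ i ∈ Icc 1 (j+1), (PX ^ i - 1))
            = (∏ i ∈ Icc 1 j, (PX ^ i - 1)) * (PX ^ (j+1) - 1) :=
          Finset.prod_Icc_succ_top (by omega) _
        have hsplit2 : (∏ i ∈ Icc (m - j + 1) (m+1), (PX ^ i - 1))
            = (∏ i ∈ Icc (m - j + 1) m, (PX ^ i - 1)) * (PX ^ (m+1) - 1) :=
          Finset.prod_Icc_succ_top (by omega) _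
        have hidx : m + 1 - (j + 1) + 1 = m - j + 1 := by omega
        rw [hidx, hrec, hsplit1, hsplit2]
        have hpow : PX ^ (j+1) * PX ^ (m - j) = PX ^ (m+1) := by
          rw [← pow_add]; congr 1; omega
        rcases eq_or_lt_of_le hjm with heq | hlt
        · subst heq
          rw [gauss_eq_zero_of_lt (by omega : _ < _ + 1)]
          rw [Nat.sub_self] at ihj ⊢
          linear_combination (PX ^ (j+1) - 1) * ihj
        · have ihj1 := ih (j+1) hlt
          have hidx2 : m - (j + 1) + 1 = m - j := by omega
          rw [hsplit1, hidx2] at ihj1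
          have hsplit3 : (∏ i ∈ Icc (m - j) m, (PX ^ i - 1))
              = (PX ^ (m - j) - 1) * ∏ i ∈ Icc (m - j + 1) m, (PX ^ i - 1) := by
            rw [show Icc (m - j + 1) m = Ioc (m - j) m from Finset.Icc_add_one_left_eq_Ioc _ _,
              Finset.Icc_eq_cons_Ioc (by omega), Finset.prod_cons]
          rw [hsplit3] at ihj1
          linear_combination (PX ^ (j+1) - 1) * ihj + Polynomial.X ^ (j+1) * ihj1
            + (∏ i ∈ Icc (m - j + 1) m, (PX ^ i - 1)) * hpow

/-- exponent multiset: all divisors (with multiplicity over the index set) -/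
def expMS (s : Finset ℕ) (f : ℕ → ℕ) : Multiset ℕ :=
  (s.val.map f).bind (fun a => (Nat.divisors a).val)

lemma prod_expMS (s : Finset ℕ) (f : ℕ → ℕ) (hf : ∀ i ∈ s, f i ≠ 0) :
    ((expMS s f).map (fun d => Polynomial.cyclotomic d ℤ)).prod
      = ∏ i ∈ s, (PX ^ (f i) - 1) := by
  rw [expMS, Multiset.map_bind, Multiset.prod_bind, Multiset.map_map]
  rw [Finset.prod_eq_multiset_prod]
  apply congrArg
  apply Multiset.map_congr rfl
  intro a ha
  simp only [Function.comp_apply]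
  have ha' : f a ≠ 0 := hf a (by exact ha)
  have := Polynomial.prod_cyclotomic_eq_X_pow_sub_one (Nat.pos_of_ne_zero ha') ℤ
  rw [← this, Finset.prod_eq_multiset_prod]

lemma count_expMS_zero (s : Finset ℕ) (f : ℕ → ℕ) :
    Multiset.count 0 (expMS s f) = 0 := by
  rw [expMS, Multiset.count_bind]
  apply Multiset.sum_eq_zero
  intro x hx
  simp only [Multiset.mem_map] at hx
  obtain ⟨a, _, rfl⟩ := hx
  rw [Multiset.count_eq_zero]
  intro h0
  have : (0 : ℕ) ∈ Nat.divisors a := h0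
  simp [Nat.mem_divisors] at this

lemma count_expMS (s : Finset ℕ) (f : ℕ → ℕ) (d : ℕ)
    (hf : ∀ i ∈ s, f i ≠ 0) :
    Multiset.count d (expMS s f) = (s.filter (fun i => d ∣ f i)).card := by
  rw [expMS, Multiset.count_bind, Multiset.map_map, Finset.card_filter]
  rw [Finset.sum]
  congr 1
  apply Multiset.map_congr rfl
  intro a ha
  have ha' : f a ≠ 0 := hf a (by exact ha)
  simp only [Function.comp_apply]
  rw [Multiset.count_eq_of_nodup (Nat.divisors (f a)).nodup]
  by_cases h : d ∣ f a
  · rw [if_pos, if_pos h]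
    exact Nat.mem_divisors.2 ⟨h, ha'⟩
  · rw [if_neg, if_neg h]
    intro hmem
    exact h (Nat.mem_divisors.1 hmem).1

lemma card_Ioc_dvd {a b d : ℕ} (hab : a ≤ b) :
    ((Ioc a b).filter (fun x => d ∣ x)).card + a / d = b / d := by
  have hu := Finset.Ioc_union_Ioc_eq_Ioc (Nat.zero_le a) hab
  have hdisj : Disjoint (Ioc 0 a) (Ioc a b) := by
    rw [Finset.disjoint_left]
    intro x hx hx'
    simp only [Finset.mem_Ioc] at hx hx'
    omega
  have h1 := Nat.Ioc_filter_dvd_card_eq_div b d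
  have h2 := Nat.Ioc_filter_dvd_card_eq_div a d
  rw [← hu, Finset.filter_union, Finset.card_union_of_disjoint
    (Finset.disjoint_filter_filter hdisj)] at h1
  omega

lemma counts_le (n k d : ℕ) (hk : 1 ≤ k) (hkn : k ≤ n) :
    ((Ioc 0 (2*k)).filter (fun x => d ∣ x)).card
      + ((Ioc 0 k).filter (fun x => d ∣ x)).card
      + ((Ioc (n-k) n).filter (fun i => d ∣ 2*i)).card
    ≤ ((Ioc (2*(n-k)+1) (2*n+1)).filter (fun x => d ∣ x)).card
      + ((Ioc 0 k).filter (fun i => d ∣ 2*i)).card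
      + ((Ioc (n-k) n).filter (fun x => d ∣ x)).card := by
  rcases eq_or_ne d 0 with rfl | hd
  · have e1 : ∀ a b : ℕ, ((Ioc a b).filter (fun x => (0:ℕ) ∣ x)).card = 0 := by
      intro a b
      rw [Finset.card_eq_zero, Finset.filter_eq_empty_iff]
      intro x hx
      simp only [Finset.mem_Ioc] at hx
      simp only [Nat.zero_dvd]
      omega
    have e2 : ∀ a b : ℕ, ((Ioc a b).filter (fun i => (0:ℕ) ∣ 2*i)).card = 0 := by
      intro a b
      rw [Finset.card_eq_zero, Finset.filter_eq_empty_iff]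
      intro x hx
      simp only [Finset.mem_Ioc] at hx
      simp only [Nat.zero_dvd]
      omega
    rw [e1, e1, e1, e1, e2, e2]
  rcases Nat.even_or_odd d with ⟨e, rfl⟩ | hodd
  · -- even case, d = e + e = 2 * e
    have he : e ≠ 0 := by omega
    have h2e : e + e = 2 * e := by omega
    rw [h2e]
    have hf2 : ∀ a b : ℕ, (Ioc a b).filter (fun i => 2*e ∣ 2*i)
        = (Ioc a b).filter (fun i => e ∣ i) := by
      intro a b
      apply Finset.filter_congr
      intro x _
      exact mul_dvd_mul_iff_left (a := (2:ℕ)) two_ne_zero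
    rw [hf2, hf2]
    have c1 := card_Ioc_dvd (d := 2*e) (Nat.zero_le (2*k))
    have c2 := card_Ioc_dvd (d := 2*e) (Nat.zero_le k)
    have c3 := card_Ioc_dvd (d := e) (show n - k ≤ n by omega)
    have c4 := card_Ioc_dvd (d := 2*e) (show 2*(n-k)+1 ≤ 2*n+1 by omega)
    have c5 := card_Ioc_dvd (d := e) (Nat.zero_le k)
    have c6 := card_Ioc_dvd (d := 2*e) (show n - k ≤ n by omega)
    rw [Nat.zero_div] at c1 c2 c5
    have hmm : (2*k)/(2*e) = k/e := Nat.mul_div_mul_left _ _ (by omega)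
    have ho1 : (2*n+1)/(2*e) = n/e := by
      rw [Nat.succ_div_of_not_dvd, Nat.mul_div_mul_left _ _ (show 0 < 2 by omega)]
      intro hdvd
      have h2 : (2:ℕ) ∣ 2*n+1 := dvd_trans ⟨e, rfl⟩ hdvd
      omega
    have ho2 : (2*(n-k)+1)/(2*e) = (n-k)/e := by
      rw [Nat.succ_div_of_not_dvd, Nat.mul_div_mul_left _ _ (show 0 < 2 by omega)]
      intro hdvd
      have h2 : (2:ℕ) ∣ 2*(n-k)+1 := dvd_trans ⟨e, rfl⟩ hdvd
      omega
    have hsup : k/(2*e) + (n-k)/(2*e) ≤ n/(2*e) := by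
      have := Nat.add_div_le_add_div k (n-k) (2*e)
      rwa [show k + (n-k) = n from by omega] at this
    rw [hmm] at c1
    rw [ho1, ho2] at c4
    -- now pure linear arithmetic in the card atoms and division atoms
    have e14 : ((Ioc (n-k) n).filter (fun i => e ∣ i)).card
        = ((Ioc (2*(n-k)+1) (2*n+1)).filter (fun x => 2*e ∣ x)).card := by omega
    have e15 : ((Ioc 0 (2*k)).filter (fun x => 2*e ∣ x)).card
        = ((Ioc 0 k).filter (fun i => e ∣ i)).card := by omega
    have h26 : ((Ioc 0 k).filter (fun x => 2*e ∣ x)).card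
        ≤ ((Ioc (n-k) n).filter (fun x => 2*e ∣ x)).card := by omega
    omega
  · -- odd case
    have hcop : Nat.Coprime d 2 := hodd.coprime_two_right
    have hf2 : ∀ a b : ℕ, (Ioc a b).filter (fun i => d ∣ 2*i)
        = (Ioc a b).filter (fun i => d ∣ i) := by
      intro a b
      apply Finset.filter_congr
      intro x _
      constructor
      · intro h
        exact hcop.dvd_of_dvd_mul_left h
      · intro h
        exact Dvd.dvd.mul_left h 2
    rw [hf2, hf2]
    have c1 := card_Ioc_dvd (d := d) (Nat.zero_le (2*k))
    have c4 := card_Ioc_dvd (d := d) (show 2*(n-k)+1 ≤ 2*n+1 by omega)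
    rw [Nat.zero_div] at c1
    have hsup : (2*k)/d + (2*(n-k)+1)/d ≤ (2*n+1)/d := by
      have := Nat.add_div_le_add_div (2*k) (2*(n-k)+1) d
      rwa [show 2*k + (2*(n-k)+1) = 2*n+1 from by omega] at this
    omega

lemma prod_onePlus_mul (s : Finset ℕ) :
    (∏ i ∈ s, (1 + PX ^ i)) * (∏ i ∈ s, (PX ^ i - 1)) = ∏ i ∈ s, (PX ^ (2*i) - 1) := by
  rw [← Finset.prod_mul_distrib]
  refine Finset.prod_congr rfl fun i _ => ?_
  have h : (1 + PX ^ i) * (PX ^ i - 1) = PX ^ i * PX ^ i - 1 := by ring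
  rw [h, ← pow_add, two_mul]

lemma key_dvd (n k : ℕ) (hk : 1 ≤ k) (hkn : k ≤ n) :
    (∏ i ∈ Icc (n - k + 1) n, (1 + PX ^ i)) ∣
      gauss (2*n+1) (2*k) * ∏ i ∈ Icc 1 k, (1 + PX ^ i) := by
  have hG : gauss (2*n+1) (2*k) * ∏ i ∈ Icc 1 (2*k), (PX^i - 1)
      = ∏ i ∈ Icc (2*(n-k)+2) (2*n+1), (PX^i - 1) := by
    have h := gauss_mul (2*n+1) (2*k) (by omega)
    rwa [show 2*n+1 - 2*k + 1 = 2*(n-k)+2 from by omega] at h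
  have h2 := prod_onePlus_mul (Icc 1 k)
  have h3 := prod_onePlus_mul (Icc (n-k+1) n)
  -- multiset divisibility
  have hle : expMS (Icc 1 (2*k)) (fun i => i) + expMS (Icc 1 k) (fun i => i)
        + expMS (Icc (n-k+1) n) (fun i => 2*i)
      ≤ expMS (Icc (2*(n-k)+2) (2*n+1)) (fun i => i) + expMS (Icc 1 k) (fun i => 2*i)
        + expMS (Icc (n-k+1) n) (fun i => i) := by
    rw [Multiset.le_iff_count]
    intro d
    simp only [Multiset.count_add]
    rw [count_expMS _ _ _ (fun i hi => by simp only [Finset.mem_Icc] at hi; omega),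
        count_expMS _ _ _ (fun i hi => by simp only [Finset.mem_Icc] at hi; omega),
        count_expMS _ _ _ (fun i hi => by simp only [Finset.mem_Icc] at hi; omega),
        count_expMS _ _ _ (fun i hi => by simp only [Finset.mem_Icc] at hi; omega),
        count_expMS _ _ _ (fun i hi => by simp only [Finset.mem_Icc] at hi; omega),
        count_expMS _ _ _ (fun i hi => by simp only [Finset.mem_Icc] at hi; omega)]
    rw [show Icc 1 (2*k) = Ioc 0 (2*k) from Finset.Icc_add_one_left_eq_Ioc 0 (2*k),
        show Icc 1 k = Ioc 0 k from Finset.Icc_add_one_left_eq_Ioc 0 k,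
        show Icc (n-k+1) n = Ioc (n-k) n from Finset.Icc_add_one_left_eq_Ioc (n-k) n,
        show Icc (2*(n-k)+2) (2*n+1) = Ioc (2*(n-k)+1) (2*n+1) from
          Finset.Icc_add_one_left_eq_Ioc (2*(n-k)+1) (2*n+1)]
    exact counts_le n k d hk hkn
  have hdvd := Multiset.prod_dvd_prod_of_le
    (Multiset.map_le_map (f := fun d => Polynomial.cyclotomic d ℤ) hle)
  rw [Multiset.map_add, Multiset.map_add, Multiset.map_add, Multiset.map_add,
      Multiset.prod_add, Multiset.prod_add, Multiset.prod_add, Multiset.prod_add,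
      prod_expMS _ _ (fun i hi => by simp only [Finset.mem_Icc] at hi; omega),
      prod_expMS _ _ (fun i hi => by simp only [Finset.mem_Icc] at hi; omega),
      prod_expMS _ _ (fun i hi => by simp only [Finset.mem_Icc] at hi; omega),
      prod_expMS _ _ (fun i hi => by simp only [Finset.mem_Icc] at hi; omega),
      prod_expMS _ _ (fun i hi => by simp only [Finset.mem_Icc] at hi; omega),
      prod_expMS _ _ (fun i hi => by simp only [Finset.mem_Icc] at hi; omega)] at hdvd
  obtain ⟨c, hc⟩ := hdvd
  refine ⟨c, ?_⟩
  have hT : (∏ i ∈ Icc 1 (2*k), (PX^i - 1)) * (∏ i ∈ Icc 1 k, (PX^i - 1))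
      * (∏ i ∈ Icc (n-k+1) n, (PX^i - 1)) ≠ 0 := by
    have hne : ∀ s : Finset ℕ, (∀ i ∈ s, i ≠ 0) → (∏ i ∈ s, (PX^i - 1)) ≠ 0 := by
      intro s hs
      apply Finset.prod_ne_zero_iff.2
      intro i hi
      have : (PX ^ i - 1) = PX ^ i - Polynomial.C 1 := by rw [Polynomial.C_1]
      rw [this]
      exact (Polynomial.monic_X_pow_sub_C (1:ℤ) (hs i hi)).ne_zero
    exact mul_ne_zero (mul_ne_zero
      (hne _ (fun i hi => by simp only [Finset.mem_Icc] at hi; omega))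
      (hne _ (fun i hi => by simp only [Finset.mem_Icc] at hi; omega)))
      (hne _ (fun i hi => by simp only [Finset.mem_Icc] at hi; omega))
  apply mul_right_cancel₀ hT
  linear_combination ((∏ i ∈ Icc 1 k, (1 + PX^i)) * (∏ i ∈ Icc 1 k, (PX^i - 1))
      * (∏ i ∈ Icc (n-k+1) n, (PX^i - 1))) * hG
    + ((∏ i ∈ Icc (2*(n-k)+2) (2*n+1), (PX^i - 1))
      * (∏ i ∈ Icc (n-k+1) n, (PX^i - 1))) * h2
    + hc
    - ((∏ i ∈ Icc 1 (2*k), (PX^i - 1)) * (∏ i ∈ Icc 1 k, (PX^i - 1)) * c) * h3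

theorem andrews_gessel_lemma (n k : ℕ) (hk : 1 ≤ k) (hkn : k ≤ n) :
    ∃ P : Polynomial ℤ,
      (gauss (2 * n + 1) (2 * k)).eval₂ (Int.castRingHom Fq) qv *
          (∏ i ∈ Finset.Icc 1 k, (1 + qv ^ i)) /
          (∏ i ∈ Finset.Icc (n - k + 1) n, (1 + qv ^ i)) =
        P.eval₂ (Int.castRingHom Fq) qv := by
  obtain ⟨P, hP⟩ := key_dvd n k hk hkn
  refine ⟨P, ?_⟩
  set ev := Polynomial.eval₂RingHom (Int.castRingHom Fq) qv with hev
  have hX : ∀ i : ℕ, ev (1 + PX ^ i) = 1 + qv ^ i := by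
    intro i
    show Polynomial.eval₂ (Int.castRingHom Fq) qv (1 + PX ^ i) = 1 + qv ^ i
    rw [Polynomial.eval₂_add, Polynomial.eval₂_one, Polynomial.eval₂_X_pow]
  have hW : ev (∏ i ∈ Icc 1 k, (1 + PX ^ i)) = ∏ i ∈ Icc 1 k, (1 + qv ^ i) := by
    rw [map_prod]
    exact Finset.prod_congr rfl fun i _ => hX i
  have hD : ev (∏ i ∈ Icc (n-k+1) n, (1 + PX ^ i)) = ∏ i ∈ Icc (n-k+1) n, (1 + qv ^ i) := by
    rw [map_prod]
    exact Finset.prod_congr rfl fun i _ => hX i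
  have hDne : ev (∏ i ∈ Icc (n-k+1) n, (1 + PX ^ i)) ≠ 0 := by
    rw [hD]
    apply Finset.prod_ne_zero_iff.2
    intro i hi
    have hi1 : i ≠ 0 := by
      simp only [Finset.mem_Icc] at hi; omega
    have hrep : (1 + qv ^ i) = algebraMap (Polynomial ℚ) Fq (1 + Polynomial.X ^ i) := by
      rw [map_add, map_one, map_pow, RatFunc.algebraMap_X]
      simp [qv]
    rw [hrep]
    intro h0
    have h1 : (1 + Polynomial.X ^ i : Polynomial ℚ) = 0 :=
      RatFunc.algebraMap_injective ℚ (h0.trans (map_zero _).symm)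
    have h2 : (Polynomial.X ^ i + Polynomial.C (1:ℚ)) = 0 := by
      rw [← h1, Polynomial.C_1, add_comm]
    exact (Polynomial.monic_X_pow_add_C (1:ℚ) hi1).ne_zero h2
  have hg : (gauss (2 * n + 1) (2 * k)).eval₂ (Int.castRingHom Fq) qv
      = ev (gauss (2 * n + 1) (2 * k)) := rfl
  rw [hg, ← hW, ← hD, ← map_mul, hP, map_mul]
  exact mul_div_cancel_left₀ _ hDne
end
end
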